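/- For an invertible real symmetric n×n matrix M, (2π)^{-n/2} ∫_{ℝⁿ} e^{-i⟨p,x⟩} e^{(i/2)⟨Mx,x⟩} dx = |det M|^{-1/2} e^{(iπ/4) sgn M} e^{-(i/2)⟨M⁻¹p, p⟩}, where sgn M is the number of positive eigenvalues of M minus the number of negative eigenvalues (the integral understood as a Fourier transform of a tempered distribution or via regularization). -/

import Mathlib

open Matrix MeasureTheory Filter Set

private lemma fresnel_cpow_half_pos_mul_I {r : ℝ} (hr : 0 < r) :
    ((r : ℂ) * Complex.I) ^ (1/2 : ℂ)
      = ((r ^ (1/2 : ℝ) : ℝ) : ℂ) * Complex.exp (Complex.I * Real.pi / 4) := by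
  have hz : (r : ℂ) * Complex.I ≠ 0 := by simp [Complex.ext_iff, hr.ne']
  rw [Complex.cpow_def_of_ne_zero hz]
  have harg : ((r : ℂ) * Complex.I).arg = Real.pi / 2 := by
    rw [Complex.arg_real_mul _ hr, Complex.arg_I]
  have habs : ‖(r : ℂ) * Complex.I‖ = r := by
    simp [abs_of_pos hr]
  rw [Complex.log, habs, harg, Real.rpow_def_of_pos hr, Complex.ofReal_exp,
    ← Complex.exp_add]
  congr 1
  push_cast
  ring

private lemma fresnel_cpow_half_pos_mul_neg_I {r : ℝ} (hr : 0 < r) :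
    ((r : ℂ) * (-Complex.I)) ^ (1/2 : ℂ)
      = ((r ^ (1/2 : ℝ) : ℝ) : ℂ) * Complex.exp (Complex.I * Real.pi / 4 * (-1)) := by
  have hz : (r : ℂ) * (-Complex.I) ≠ 0 := by simp [Complex.ext_iff, hr.ne']
  rw [Complex.cpow_def_of_ne_zero hz]
  have harg : ((r : ℂ) * (-Complex.I)).arg = -(Real.pi / 2) := by
    rw [Complex.arg_real_mul _ hr, Complex.arg_neg_I]
  have habs : ‖(r : ℂ) * (-Complex.I)‖ = r := by
    simp [abs_of_pos hr]
  rw [Complex.log, habs, harg, Real.rpow_def_of_pos hr, Complex.ofReal_exp,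
    ← Complex.exp_add]
  congr 1
  push_cast
  ring

/-- The regularized Fresnel integral, after diagonalization, for `ε > 0`. -/
private lemma fresnel_integral_eq (n : ℕ) (M U : Matrix (Fin n) (Fin n) ℝ)
    (lam q p : Fin n → ℝ)
    (hdetU : U.det ≠ 0) (habsdetU : |U.det| = 1)
    (hquad : ∀ y : Fin n → ℝ, (M *ᵥ (U *ᵥ y)) ⬝ᵥ (U *ᵥ y) = ∑ i, lam i * (y i * y i))
    (hlin : ∀ y : Fin n → ℝ, p ⬝ᵥ (U *ᵥ y) = q ⬝ᵥ y)
    (hdot : ∀ a b : Fin n → ℝ, (U *ᵥ a) ⬝ᵥ (U *ᵥ b) = a ⬝ᵥ b)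
    (ε : ℝ) (hε : 0 < ε) :
    (∫ x : Fin n → ℝ, Complex.exp (-Complex.I * (p ⬝ᵥ x : ℝ) +
        (Complex.I / 2) * (M.mulVec x ⬝ᵥ x : ℝ) - (ε : ℂ) * (x ⬝ᵥ x : ℝ)))
    = ∏ i, (↑Real.pi / ((ε : ℂ) - Complex.I * lam i / 2)) ^ (1/2 : ℂ) *
        Complex.exp (-(q i : ℂ)^2 / (4 * ((ε : ℂ) - Complex.I * lam i / 2))) := by
  have hcont : Continuous fun x : Fin n → ℝ => Complex.exp (-Complex.I * (p ⬝ᵥ x : ℝ) +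
      (Complex.I / 2) * (M.mulVec x ⬝ᵥ x : ℝ) - (ε : ℂ) * (x ⬝ᵥ x : ℝ)) := by
    have h1 : ∀ a : Fin n → ℝ, Continuous fun x : Fin n → ℝ => (a ⬝ᵥ x : ℝ) := by
      intro a
      simp only [dotProduct]
      exact continuous_finset_sum _ fun i _ => continuous_const.mul (continuous_apply i)
    have h2 : Continuous fun x : Fin n → ℝ => (M.mulVec x ⬝ᵥ x : ℝ) := by
      simp only [dotProduct, Matrix.mulVec]
      exact continuous_finset_sum _ fun i _ => ((h1 (M i)).mul (continuous_apply i))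
    have h3 : Continuous fun x : Fin n → ℝ => (x ⬝ᵥ x : ℝ) := by
      simp only [dotProduct]
      exact continuous_finset_sum _ fun i _ => (continuous_apply i).mul (continuous_apply i)
    exact Complex.continuous_exp.comp <| ((continuous_const.mul
      (Complex.continuous_ofReal.comp (h1 p))).add (continuous_const.mul
      (Complex.continuous_ofReal.comp h2))).sub (continuous_const.mul
      (Complex.continuous_ofReal.comp h3))
  have hmap : Measure.map (Matrix.toLin' U) volume = volume := by
    rw [Real.map_matrix_volume_pi_eq_smul_volume_pi hdetU, abs_inv, habsdetU]
    simp
  have hchg : (∫ x : Fin n → ℝ, Complex.exp (-Complex.I * (p ⬝ᵥ x : ℝ) +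
        (Complex.I / 2) * (M.mulVec x ⬝ᵥ x : ℝ) - (ε : ℂ) * (x ⬝ᵥ x : ℝ)))
      = ∫ y : Fin n → ℝ, Complex.exp (-Complex.I * (p ⬝ᵥ (U *ᵥ y) : ℝ) +
        (Complex.I / 2) * (M.mulVec (U *ᵥ y) ⬝ᵥ (U *ᵥ y) : ℝ) -
          (ε : ℂ) * ((U *ᵥ y) ⬝ᵥ (U *ᵥ y) : ℝ)) := by
    conv_lhs => rw [← hmap]
    rw [integral_map ((Matrix.toLin' U).continuous_of_finiteDimensional).aemeasurable
      (hmap ▸ hcont.aestronglyMeasurable)]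
    simp only [Matrix.toLin'_apply]
  rw [hchg]
  have hb : ∀ i : Fin n, 0 < ((ε : ℂ) - Complex.I * lam i / 2).re := by
    intro i; simp [hε]
  have hint : (∫ y : Fin n → ℝ, Complex.exp (-Complex.I * (p ⬝ᵥ (U *ᵥ y) : ℝ) +
        (Complex.I / 2) * (M.mulVec (U *ᵥ y) ⬝ᵥ (U *ᵥ y) : ℝ) -
          (ε : ℂ) * ((U *ᵥ y) ⬝ᵥ (U *ᵥ y) : ℝ)))
      = ∫ y : Fin n → ℝ, Complex.exp (-(∑ i, ((ε : ℂ) - Complex.I * lam i / 2) * (y i : ℂ)^2)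
          + ∑ i, (-Complex.I * q i) * (y i : ℂ)) := by
    congr 1
    funext y
    rw [hlin, hquad, hdot]
    congr 1
    simp only [dotProduct]
    push_cast
    simp only [Finset.mul_sum, ← Finset.sum_neg_distrib, ← Finset.sum_add_distrib,
      ← Finset.sum_sub_distrib]
    exact Finset.sum_congr rfl fun i _ => by ring
  rw [hint, GaussianFourier.integral_cexp_neg_sum_mul_add hb (fun i => -Complex.I * q i)]
  refine Finset.prod_congr rfl fun i _ => ?_
  congr 1
  congr 1
  rw [mul_pow, neg_pow, Complex.I_sq]
  ring

/-- The value of the limit. -/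
private lemma fresnel_limit_value (n : ℕ) (lam q : Fin n → ℝ) (d : ℝ) (hd : d = ∏ i, lam i)
    (hlam_ne : ∀ i, lam i ≠ 0) (sgn : ℤ)
    (hz : (∑ i, (if 0 < lam i then (1:ℤ) else -1)) = sgn) (w : ℝ)
    (hw : w = ∑ i, (lam i)⁻¹ * (q i * q i)) :
    (((2 * Real.pi : ℝ) ^ (-(n : ℝ) / 2) : ℝ) : ℂ) *
      ∏ i, (↑Real.pi / (((0:ℝ) : ℂ) - Complex.I * lam i / 2)) ^ (1/2 : ℂ) *
        Complex.exp (-(q i : ℂ)^2 / (4 * (((0:ℝ) : ℂ) - Complex.I * lam i / 2)))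
    = (((|d| : ℝ) ^ (-(1 : ℝ) / 2) : ℝ) : ℂ) *
        Complex.exp (Complex.I * Real.pi / 4 * (sgn : ℂ)) *
        Complex.exp (-(Complex.I / 2) * (w : ℝ)) := by
  have hpi : (0:ℝ) < 2 * Real.pi := by positivity
  have hfac : ∀ i, (↑Real.pi / (((0:ℝ) : ℂ) - Complex.I * lam i / 2)) ^ (1/2 : ℂ) *
        Complex.exp (-(q i : ℂ)^2 / (4 * (((0:ℝ) : ℂ) - Complex.I * lam i / 2)))
      = (((2 * Real.pi / |lam i| : ℝ) ^ ((1:ℝ)/2) : ℝ) : ℂ) *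
          Complex.exp (Complex.I * Real.pi / 4 * ((if 0 < lam i then (1:ℤ) else -1 : ℤ) : ℂ)) *
          Complex.exp (-(Complex.I / 2) * (((lam i)⁻¹ * (q i * q i) : ℝ) : ℂ)) := by
    intro i
    have hli := hlam_ne i
    have hIl : (((0:ℝ) : ℂ) - Complex.I * lam i / 2) ≠ 0 := by
      simp [Complex.ext_iff, hli]
    have hexp : (-(q i : ℂ)^2 / (4 * (((0:ℝ) : ℂ) - Complex.I * lam i / 2)))
        = -(Complex.I / 2) * (((lam i)⁻¹ * (q i * q i) : ℝ) : ℂ) := by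
      have hlc : (lam i : ℂ) ≠ 0 := by exact_mod_cast hli
      push_cast
      field_simp
      ring_nf
      rw [Complex.I_sq]
      ring
    rw [hexp]
    congr 1
    rcases hli.lt_or_gt with hneg | hpos
    · have habs : |lam i| = -lam i := abs_of_neg hneg
      have hval : (↑Real.pi / (((0:ℝ) : ℂ) - Complex.I * lam i / 2))
          = ((2 * Real.pi / |lam i| : ℝ) : ℂ) * (-Complex.I) := by
        rw [div_eq_iff hIl, habs]
        have hlc : (lam i : ℂ) ≠ 0 := by exact_mod_cast hli
        push_cast
        field_simp
        ring_nf
        rw [Complex.I_sq]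
        ring
      rw [hval, fresnel_cpow_half_pos_mul_neg_I (by positivity : (0:ℝ) < 2 * Real.pi / |lam i|)]
      rw [if_neg (by exact not_lt.mpr hneg.le)]
      norm_num
    · have habs : |lam i| = lam i := abs_of_pos hpos
      have hval : (↑Real.pi / (((0:ℝ) : ℂ) - Complex.I * lam i / 2))
          = ((2 * Real.pi / |lam i| : ℝ) : ℂ) * Complex.I := by
        rw [div_eq_iff hIl, habs]
        have hlc : (lam i : ℂ) ≠ 0 := by exact_mod_cast hli
        push_cast
        field_simp
        ring_nf
        rw [Complex.I_sq]
        ring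
      rw [hval, fresnel_cpow_half_pos_mul_I (by positivity : (0:ℝ) < 2 * Real.pi / |lam i|)]
      rw [if_pos hpos]
      norm_num
  rw [Finset.prod_congr rfl fun i _ => hfac i]
  simp only [Finset.prod_mul_distrib]
  rw [← Complex.exp_sum, ← Complex.exp_sum]
  have hs1 : (∑ i, Complex.I * Real.pi / 4 * ((if 0 < lam i then (1:ℤ) else -1 : ℤ) : ℂ))
      = Complex.I * Real.pi / 4 * (sgn : ℂ) := by
    rw [← Finset.mul_sum]
    congr 1
    rw [← hz]
    push_cast
    rfl
  have hs2 : (∑ i, -(Complex.I / 2) * (((lam i)⁻¹ * (q i * q i) : ℝ) : ℂ))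
      = -(Complex.I / 2) * (w : ℂ) := by
    rw [← Finset.mul_sum, hw]
    push_cast
    rfl
  rw [hs1, hs2]
  have hprod : (∏ i, (((2 * Real.pi / |lam i| : ℝ) ^ ((1:ℝ)/2) : ℝ) : ℂ))
      = ((∏ i, (2 * Real.pi / |lam i|) ^ ((1:ℝ)/2) : ℝ) : ℂ) := by
    push_cast
    rfl
  rw [hprod]
  have hreal : ((2 * Real.pi : ℝ) ^ (-(n : ℝ) / 2) : ℝ) *
      (∏ i, (2 * Real.pi / |lam i|) ^ ((1:ℝ)/2) : ℝ) = (|d| : ℝ) ^ (-(1 : ℝ) / 2) := by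
    have habsd : |d| = ∏ i, |lam i| := by rw [hd, Finset.abs_prod]
    have hdpos : (0:ℝ) < |d| := by
      rw [habsd]
      exact Finset.prod_pos fun i _ => abs_pos.mpr (hlam_ne i)
    rw [Real.finset_prod_rpow _ _ (fun i _ => by positivity) _]
    rw [Finset.prod_div_distrib, Finset.prod_const, Finset.card_univ, Fintype.card_fin,
      ← habsd]
    rw [Real.div_rpow (by positivity) (abs_nonneg d)]
    rw [← Real.rpow_natCast (2 * Real.pi) n, ← Real.rpow_mul hpi.le]
    rw [div_eq_mul_inv ((2*Real.pi) ^ ((n:ℝ) * (1/2))) _, ← mul_assoc,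
      ← Real.rpow_add hpi]
    have : -(n : ℝ)/2 + (n:ℝ) * (1/2) = 0 := by ring
    rw [this, Real.rpow_zero, one_mul, ← Real.rpow_neg_one (|d| ^ ((1:ℝ)/2)),
      ← Real.rpow_mul hdpos.le]
    norm_num
  calc (((2 * Real.pi : ℝ) ^ (-(n : ℝ) / 2) : ℝ) : ℂ) *
        (((∏ i, (2 * Real.pi / |lam i|) ^ ((1:ℝ)/2) : ℝ) : ℂ) *
          Complex.exp (Complex.I * Real.pi / 4 * (sgn : ℂ)) *
          Complex.exp (-(Complex.I / 2) * (w : ℂ)))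
      = ((((2 * Real.pi : ℝ) ^ (-(n : ℝ) / 2) : ℝ) *
          (∏ i, (2 * Real.pi / |lam i|) ^ ((1:ℝ)/2) : ℝ) : ℝ) : ℂ) *
          Complex.exp (Complex.I * Real.pi / 4 * (sgn : ℂ)) *
          Complex.exp (-(Complex.I / 2) * (w : ℂ)) := by
        push_cast
        ring
    _ = _ := by rw [hreal]

/-- Continuity of the regularized closed form as `ε → 0⁺`. -/
private lemma fresnel_tendsto (n : ℕ) (lam q : Fin n → ℝ) (hlam_ne : ∀ i, lam i ≠ 0) (c : ℂ) :
    Tendsto (fun ε : ℝ => c *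
        ∏ i, (↑Real.pi / ((ε : ℂ) - Complex.I * lam i / 2)) ^ (1/2 : ℂ) *
          Complex.exp (-(q i : ℂ)^2 / (4 * ((ε : ℂ) - Complex.I * lam i / 2))))
      (nhdsWithin 0 (Ioi 0))
      (nhds (c *
        ∏ i, (↑Real.pi / (((0:ℝ) : ℂ) - Complex.I * lam i / 2)) ^ (1/2 : ℂ) *
          Complex.exp (-(q i : ℂ)^2 / (4 * (((0:ℝ) : ℂ) - Complex.I * lam i / 2))))) := by
  refine Filter.Tendsto.const_mul c ?_
  refine tendsto_finset_prod _ fun i _ => ?_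
  have hli := hlam_ne i
  have hlc : (lam i : ℂ) ≠ 0 := by exact_mod_cast hli
  have hne : (((0:ℝ) : ℂ) - Complex.I * lam i / 2) ≠ 0 := by
    simp [Complex.ext_iff, hli]
  have h0 : Tendsto (fun ε : ℝ => (ε : ℂ) - Complex.I * lam i / 2)
      (nhdsWithin 0 (Ioi 0)) (nhds (((0:ℝ) : ℂ) - Complex.I * lam i / 2)) :=
    ((Complex.continuous_ofReal.sub continuous_const).tendsto 0).mono_left
      nhdsWithin_le_nhds
  have hdiv : Tendsto (fun ε : ℝ => (↑Real.pi / ((ε : ℂ) - Complex.I * lam i / 2)))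
      (nhdsWithin 0 (Ioi 0)) (nhds (↑Real.pi / (((0:ℝ) : ℂ) - Complex.I * lam i / 2))) :=
    tendsto_const_nhds.div h0 hne
  have hval : (↑Real.pi / (((0:ℝ) : ℂ) - Complex.I * lam i / 2))
      = ((2 * Real.pi / lam i : ℝ) : ℂ) * Complex.I := by
    rw [div_eq_iff hne]
    push_cast
    field_simp
    ring_nf
    rw [Complex.I_sq]
    ring
  have hslit : (↑Real.pi / (((0:ℝ) : ℂ) - Complex.I * lam i / 2)) ∈ Complex.slitPlane := by
    rw [hval]
    right
    simp [div_eq_zero_iff, Real.pi_ne_zero, hli]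
  have h1 : Tendsto (fun ε : ℝ => (↑Real.pi / ((ε : ℂ) - Complex.I * lam i / 2)) ^ (1/2 : ℂ))
      (nhdsWithin 0 (Ioi 0))
      (nhds ((↑Real.pi / (((0:ℝ) : ℂ) - Complex.I * lam i / 2)) ^ (1/2 : ℂ))) :=
    (continuousAt_cpow_const hslit).tendsto.comp hdiv
  have h4ne : (4 : ℂ) * (((0:ℝ) : ℂ) - Complex.I * lam i / 2) ≠ 0 :=
    mul_ne_zero (by norm_num) hne
  have h2 : Tendsto (fun ε : ℝ =>
        Complex.exp (-(q i : ℂ)^2 / (4 * ((ε : ℂ) - Complex.I * lam i / 2))))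
      (nhdsWithin 0 (Ioi 0))
      (nhds (Complex.exp (-(q i : ℂ)^2 / (4 * (((0:ℝ) : ℂ) - Complex.I * lam i / 2))))) :=
    Complex.continuous_exp.continuousAt.tendsto.comp
      (tendsto_const_nhds.div (tendsto_const_nhds.mul h0) h4ne)
  exact h1.mul h2

/-- Generalized Fresnel formula: for an invertible real symmetric matrix `M`,
`(2π)^{-n/2} ∫ e^{-i⟨p,x⟩} e^{(i/2)⟨Mx,x⟩} dx
  = |det M|^{-1/2} e^{iπ sgn M/4} e^{-(i/2)⟨M⁻¹p,p⟩}`,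
the integral being understood via Gaussian regularization `e^{-ε‖x‖²}`, `ε → 0⁺`. -/
theorem fresnel_formula (n : ℕ) (M : Matrix (Fin n) (Fin n) ℝ)
    (hM : M.IsHermitian) (hdet : M.det ≠ 0) (p : Fin n → ℝ)
    (sgn : ℤ)
    (hsgn : sgn =
      ((Finset.univ.filter fun i => 0 < hM.eigenvalues i).card : ℤ) -
      ((Finset.univ.filter fun i => hM.eigenvalues i < 0).card : ℤ)) :
    Tendsto
      (fun ε : ℝ =>
        ((2 * Real.pi : ℝ) ^ (-(n : ℝ) / 2) : ℝ) *
          ∫ x : Fin n → ℝ,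
            Complex.exp (-Complex.I * (p ⬝ᵥ x : ℝ) +
              (Complex.I / 2) * (M.mulVec x ⬝ᵥ x : ℝ) - (ε : ℂ) * (x ⬝ᵥ x : ℝ)))
      (nhdsWithin 0 (Ioi 0))
      (nhds (((|M.det| : ℝ) ^ (-(1 : ℝ) / 2) : ℝ) *
        Complex.exp (Complex.I * Real.pi / 4 * (sgn : ℂ)) *
        Complex.exp (-(Complex.I / 2) * (M⁻¹.mulVec p ⬝ᵥ p : ℝ)))) := by
  set U : Matrix (Fin n) (Fin n) ℝ := (hM.eigenvectorUnitary : Matrix (Fin n) (Fin n) ℝ) with hU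
  set lam : Fin n → ℝ := hM.eigenvalues with hlam
  have hdetprod : M.det = ∏ i, lam i := by
    simpa using hM.det_eq_prod_eigenvalues
  have hlam_ne : ∀ i, lam i ≠ 0 := by
    intro i hi
    exact hdet (by rw [hdetprod]; exact Finset.prod_eq_zero (Finset.mem_univ i) hi)
  have hUtU : Uᵀ * U = 1 := by
    have := (Matrix.mem_unitaryGroup_iff').mp hM.eigenvectorUnitary.2
    simpa [star_eq_conjTranspose] using this
  have hUUt : U * Uᵀ = 1 := by
    have := (Matrix.mem_unitaryGroup_iff).mp hM.eigenvectorUnitary.2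
    simpa [star_eq_conjTranspose] using this
  have hspec : M = U * Matrix.diagonal lam * Uᵀ := by
    have := hM.spectral_theorem
    simpa [star_eq_conjTranspose] using this
  have hdetU : U.det ≠ 0 := by
    intro h
    have := congrArg Matrix.det hUtU
    simp [Matrix.det_mul, h] at this
  have habsdetU : |U.det| = 1 := by
    have h2 : U.det * U.det = 1 := by
      have := congrArg Matrix.det hUtU
      simpa [Matrix.det_mul, Matrix.det_transpose] using this
    rcases mul_self_eq_one_iff.mp h2 with h | h <;> simp [h]
  have hdot : ∀ a b : Fin n → ℝ, (U *ᵥ a) ⬝ᵥ (U *ᵥ b) = a ⬝ᵥ b := by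
    intro a b
    rw [Matrix.dotProduct_mulVec, Matrix.vecMul_mulVec, hUtU, Matrix.vecMul_one]
  set q : Fin n → ℝ := Uᵀ *ᵥ p with hq
  have hpq : p = U *ᵥ q := by
    rw [hq, Matrix.mulVec_mulVec, hUUt, Matrix.one_mulVec]
  have hquad : ∀ y : Fin n → ℝ, (M *ᵥ (U *ᵥ y)) ⬝ᵥ (U *ᵥ y) = ∑ i, lam i * (y i * y i) := by
    intro y
    have hMU : M *ᵥ (U *ᵥ y) = U *ᵥ (Matrix.diagonal lam *ᵥ y) := by
      rw [Matrix.mulVec_mulVec, Matrix.mulVec_mulVec, hspec, Matrix.mul_assoc,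
        Matrix.mul_assoc, hUtU, Matrix.mul_one]
    rw [hMU, hdot, dotProduct]
    simp [Matrix.mulVec_diagonal, mul_assoc]
  have hlin : ∀ y : Fin n → ℝ, p ⬝ᵥ (U *ᵥ y) = q ⬝ᵥ y := by
    intro y
    rw [Matrix.dotProduct_mulVec, hq, ← Matrix.vecMul_transpose, Matrix.transpose_transpose]
  have hMinv : M⁻¹ = U * Matrix.diagonal (fun i => (lam i)⁻¹) * Uᵀ := by
    refine Matrix.inv_eq_right_inv ?_
    rw [hspec]
    simp only [Matrix.mul_assoc]
    rw [← Matrix.mul_assoc Uᵀ U, hUtU, Matrix.one_mul,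
      ← Matrix.mul_assoc (Matrix.diagonal lam), Matrix.diagonal_mul_diagonal]
    have : (fun i => lam i * (lam i)⁻¹) = fun _ => (1:ℝ) := by
      funext i; exact mul_inv_cancel₀ (hlam_ne i)
    rw [this, Matrix.diagonal_one, Matrix.one_mul, hUUt]
  have hMinvp : (M⁻¹ *ᵥ p) ⬝ᵥ p = ∑ i, (lam i)⁻¹ * (q i * q i) := by
    have h1 : M⁻¹ *ᵥ p = U *ᵥ ((Matrix.diagonal fun i => (lam i)⁻¹) *ᵥ q) := by
      rw [hMinv, hq]
      simp only [← Matrix.mulVec_mulVec]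
    conv_lhs => rw [h1, hpq]
    rw [hdot, dotProduct]
    simp [Matrix.mulVec_diagonal, mul_assoc]
  have hz : (∑ i, (if 0 < lam i then (1:ℤ) else -1)) = sgn := by
    rw [hsgn]
    rw [← Finset.sum_filter_add_sum_filter_not Finset.univ (fun i => 0 < lam i)]
    have h1 : (∑ i ∈ Finset.univ.filter (fun i => 0 < lam i),
        (if 0 < lam i then (1:ℤ) else -1))
        = ((Finset.univ.filter fun i => 0 < lam i).card : ℤ) := by
      rw [Finset.sum_congr rfl fun i hi => if_pos (Finset.mem_filter.mp hi).2]
      simp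
    have h2 : Finset.univ.filter (fun i => ¬ 0 < lam i)
        = Finset.univ.filter (fun i => lam i < 0) := by
      apply Finset.filter_congr
      intro i _
      constructor
      · exact fun h => (not_lt.mp h).lt_of_ne (hlam_ne i)
      · exact fun h => not_lt.mpr h.le
    have h3 : (∑ i ∈ Finset.univ.filter (fun i => ¬ 0 < lam i),
        (if 0 < lam i then (1:ℤ) else -1))
        = -((Finset.univ.filter fun i => lam i < 0).card : ℤ) := by
      rw [h2, Finset.sum_congr rfl fun i hi =>
        if_neg (not_lt.mpr (Finset.mem_filter.mp hi).2.le)]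
      simp
    rw [h1, h3]
    ring
  have hlimit := fresnel_tendsto n lam q hlam_ne
    (((2 * Real.pi : ℝ) ^ (-(n : ℝ) / 2) : ℝ) : ℂ)
  have hL := fresnel_limit_value n lam q M.det hdetprod hlam_ne sgn hz
    ((M⁻¹ *ᵥ p) ⬝ᵥ p) hMinvp
  rw [hL] at hlimit
  refine Filter.Tendsto.congr' ?_ hlimit
  filter_upwards [self_mem_nhdsWithin] with ε hε
  rw [fresnel_integral_eq n M U lam q p hdetU habsdetU hquad hlin hdot ε hε]
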